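/- Let p be a positive integer and let K, L ∈ ℍ^{p×p} be Hermitian quaternionic matrices with K positive definite. Then the Sylvester equation KS + SK = L has a unique solution S ∈ ℍ^{p×p}, and this unique solution is Hermitian. -/

import Mathlib

open Matrix
open scoped Quaternion

lemma re_sum' {ι : Type*} (s : Finset ι) (f : ι → ℍ[ℝ]) :
    (∑ i ∈ s, f i).re = ∑ i ∈ s, (f i).re :=
  map_sum (QuaternionAlgebra.reₗ (R := ℝ) (-1) 0 (-1)) f s

lemma trace_mul_re_comm {p : ℕ} (A B : Matrix (Fin p) (Fin p) ℍ[ℝ]) :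
    ((A*B).trace).re = ((B*A).trace).re := by
  simp only [Matrix.trace, Matrix.diag, Matrix.mul_apply, re_sum']
  rw [Finset.sum_comm]
  simp [Quaternion.re_mul, mul_comm]

lemma trace_col {p : ℕ} (K S : Matrix (Fin p) (Fin p) ℍ[ℝ]) :
    (Sᴴ*K*S).trace = ∑ j, star (fun i => S i j) ⬝ᵥ K *ᵥ (fun i => S i j) := by
  rw [Matrix.mul_assoc]
  simp [Matrix.trace, Matrix.diag, Matrix.mul_apply, dotProduct,
    Matrix.mulVec, Matrix.conjTranspose_apply]

lemma trace_row {p : ℕ} (K S : Matrix (Fin p) (Fin p) ℍ[ℝ]) :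
    (S*K*Sᴴ).trace = ∑ i, star (fun k => star (S i k)) ⬝ᵥ K *ᵥ (fun k => star (S i k)) := by
  rw [Matrix.mul_assoc]
  simp [Matrix.trace, Matrix.diag, Matrix.mul_apply, dotProduct,
    Matrix.mulVec, Matrix.conjTranspose_apply]

/-- For Hermitian `K, L ∈ ℍ^{p×p}` with `K` positive definite, the Sylvester equation
`KS + SK = L` has a unique solution, and this solution is Hermitian. -/
theorem quaternionic_sylvester_unique_hermitian_solution (p : ℕ) (hp : 0 < p)
    (K L : Matrix (Fin p) (Fin p) ℍ[ℝ]) (hK : Kᴴ = K) (hL : Lᴴ = L)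
    (hKpd : ∀ x : Fin p → ℍ[ℝ], x ≠ 0 → 0 < (star x ⬝ᵥ K *ᵥ x).re) :
    (∃! S : Matrix (Fin p) (Fin p) ℍ[ℝ], K * S + S * K = L) ∧
      ∀ S : Matrix (Fin p) (Fin p) ℍ[ℝ], K * S + S * K = L → Sᴴ = S := by
  -- nonnegativity of the quadratic form
  have hnn : ∀ x : Fin p → ℍ[ℝ], 0 ≤ (star x ⬝ᵥ K *ᵥ x).re := by
    intro x
    by_cases hx : x = 0
    · simp [hx]
    · exact le_of_lt (hKpd x hx)
  -- injectivity of S ↦ K*S + S*K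
  have hinj : ∀ S : Matrix (Fin p) (Fin p) ℍ[ℝ], K * S + S * K = 0 → S = 0 := by
    intro S hS
    have h0 : ((Sᴴ * (K * S + S * K)).trace).re = 0 := by rw [hS]; simp
    have hexp : ((Sᴴ * (K * S + S * K)).trace).re
        = ((Sᴴ*K*S).trace).re + ((S*K*Sᴴ).trace).re := by
      rw [Matrix.mul_add, Matrix.trace_add]
      have : ((Sᴴ * S * K).trace).re = ((S * K * Sᴴ).trace).re := by
        rw [Matrix.mul_assoc Sᴴ S K]; exact trace_mul_re_comm _ _
      rw [Quaternion.re_add, ← Matrix.mul_assoc, ← Matrix.mul_assoc, this]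
    have hcol : ((Sᴴ*K*S).trace).re
        = ∑ j, (star (fun i => S i j) ⬝ᵥ K *ᵥ (fun i => S i j)).re := by
      rw [trace_col, re_sum']
    have hrow : ((S*K*Sᴴ).trace).re
        = ∑ i, (star (fun k => star (S i k)) ⬝ᵥ K *ᵥ (fun k => star (S i k))).re := by
      rw [trace_row, re_sum']
    have hcolnn : 0 ≤ ∑ j, (star (fun i => S i j) ⬝ᵥ K *ᵥ (fun i => S i j)).re :=
      Finset.sum_nonneg fun j _ => hnn _
    have hrownn : 0 ≤ ∑ i, (star (fun k => star (S i k)) ⬝ᵥ K *ᵥ (fun k => star (S i k))).re :=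
      Finset.sum_nonneg fun i _ => hnn _
    have hcz : ∑ j, (star (fun i => S i j) ⬝ᵥ K *ᵥ (fun i => S i j)).re = 0 := by
      rw [hexp, hcol, hrow] at h0; linarith
    have hcols : ∀ j : Fin p, (fun i => S i j) = 0 := by
      intro j
      by_contra hj
      have hpos := hKpd _ hj
      have := (Finset.sum_eq_zero_iff_of_nonneg (fun i _ => hnn _)).mp hcz j (Finset.mem_univ j)
      linarith
    exact Matrix.ext fun i j => by simpa using congrFun (hcols j) i
  -- the linear map T S = K*S + S*K
  let T : Matrix (Fin p) (Fin p) ℍ[ℝ] →ₗ[ℝ] Matrix (Fin p) (Fin p) ℍ[ℝ] :=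
    { toFun := fun S => K * S + S * K
      map_add' := fun A B => by
        simp only [Matrix.mul_add, Matrix.add_mul]; abel
      map_smul' := fun c A => by
        simp only [RingHom.id_apply, Matrix.mul_smul, Matrix.smul_mul, smul_add] }
  have hTinj : Function.Injective T := by
    rw [injective_iff_map_eq_zero T]
    intro S hS
    exact hinj S hS
  have hTsurj : Function.Surjective T :=
    (LinearMap.injective_iff_surjective (f := T)).mp hTinj
  obtain ⟨S₀, hS₀⟩ := hTsurj L
  have huniq : ∀ S S' : Matrix (Fin p) (Fin p) ℍ[ℝ],
      K * S + S * K = L → K * S' + S' * K = L → S = S' := by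
    intro S S' h h'
    exact hTinj (by show K * S + S * K = K * S' + S' * K; rw [h, h'])
  have herm : ∀ S : Matrix (Fin p) (Fin p) ℍ[ℝ], K * S + S * K = L → Sᴴ = S := by
    intro S hSeq
    have h' : K * Sᴴ + Sᴴ * K = L := by
      have := congrArg Matrix.conjTranspose hSeq
      rw [Matrix.conjTranspose_add, Matrix.conjTranspose_mul, Matrix.conjTranspose_mul,
        hK, hL] at this
      rw [← this]; exact add_comm _ _
    exact huniq _ _ h' hSeq
  refine ⟨⟨S₀, hS₀, fun S hS => huniq S S₀ hS hS₀⟩, herm⟩
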